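/- (Generating function of Legendre polynomials.) For every real number x, the map t ↦ (1 - 2tx + t²)^{-1/2} is real analytic in a neighborhood of t = 0, and for every n ≥ 0 its n-th Taylor coefficient at t = 0 equals p_n(x), the n-th Legendre polynomial given by Rodrigues' formula; equivalently, (1/n!)·(d/dt)^n (1 - 2tx + t²)^{-1/2} evaluated at t = 0 equals (1/(2^n n!))·(d/dx)^n [(x²-1)^n]. -/

import Mathlib

/-- The `n`-th Legendre polynomial, given by Rodrigues' formula
`p_n(x) = (1/(2^n n!))·(d/dx)^n [(x²-1)^n]`. -/
noncomputable def legendreP (n : ℕ) (x : ℝ) : ℝ :=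
  (1 / (2 ^ n * (Nat.factorial n : ℝ))) * iteratedDeriv n (fun y : ℝ => (y ^ 2 - 1) ^ n) x

namespace LegendreGF

open Polynomial Finset FormalMultilinearSeries

noncomputable def Rr (n : ℕ) : Polynomial ℝ := derivative^[n] ((X ^ 2 - 1) ^ n)

lemma L1 (m : ℕ) (q : Polynomial ℝ) :
    derivative^[m + 1] (X * q) =
      X * derivative^[m + 1] q + ((m : Polynomial ℝ) + 1) * derivative^[m] q := by
  induction m generalizing q with
  | zero => simp [derivative_mul]; ring
  | succ m ih =>
    rw [Function.iterate_succ_apply', ih]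
    simp only [derivative_add, derivative_mul, derivative_X, one_mul, derivative_natCast,
      derivative_one, zero_add, add_zero, zero_mul, ← Function.iterate_succ_apply' derivative]
    push_cast
    ring

lemma C_fix (a b : ℝ) : (C (a * b) : Polynomial ℝ) = C a * C b := map_mul _ _ _

lemma F1 (n : ℕ) : derivative (((X : Polynomial ℝ) ^ 2 - 1) ^ (n + 1)) =
    C ((2 : ℝ) * (n + 1)) * (X * ((X : Polynomial ℝ) ^ 2 - 1) ^ n) := by
  rw [derivative_pow_succ]
  simp only [derivative_sub, derivative_one, derivative_X_pow, map_mul, map_add, map_one,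
    map_ofNat, C_eq_natCast]
  push_cast
  ring

lemma C_norm (n : ℕ) : (C ((2 : ℝ) * (n + 1)) : Polynomial ℝ) = 2 * ((n : Polynomial ℝ) + 1) := by
  simp only [map_mul, map_add, map_one, map_ofNat, C_eq_natCast]

lemma hI (n : ℕ) : derivative (Rr (n + 1)) =
    2 * ((n : Polynomial ℝ) + 1) * (X * derivative (Rr n)) +
      2 * ((n : Polynomial ℝ) + 1) ^ 2 * Rr n := by
  have e1 : derivative (Rr (n + 1)) = derivative^[n + 1] (derivative (((X : Polynomial ℝ)^2 - 1) ^ (n+1))) := by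
    rw [Rr, ← Function.iterate_succ_apply' derivative, Function.iterate_succ_apply]
  rw [e1, F1, iterate_derivative_C_mul, L1, Function.iterate_succ_apply' derivative n, C_norm]
  have h2 : derivative^[n] (((X : Polynomial ℝ)^2 - 1) ^ n) = Rr n := rfl
  rw [h2]
  ring

lemma hIII (n : ℕ) : Rr (n + 1) =
    2 * ((n : Polynomial ℝ) + 1) * (X * Rr n) + 2 * ((X:Polynomial ℝ)^2 - 1) * derivative (Rr n) := by
  cases n with
  | zero =>
    show derivative^[0+1] (((X:Polynomial ℝ) ^ 2 - 1) ^ (0+1)) = _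
    rw [pow_one, Function.iterate_one]
    simp only [Rr, pow_zero, Function.iterate_zero, id_eq, derivative_sub, derivative_one,
      derivative_X_pow, derivative_one, Nat.cast_zero, C_eq_natCast, map_ofNat]
    push_cast
    ring
  | succ m =>
    set q : Polynomial ℝ := ((X : Polynomial ℝ)^2 - 1) ^ (m + 1) with hq
    have hDq2 : derivative^[m+2] q = derivative (Rr (m+1)) := by
      rw [Rr, Function.iterate_succ_apply' derivative (m+1)]
    have hDq1 : derivative^[m+1] q = Rr (m+1) := rfl
    have e_star : Rr (m + 2) = 2 * ((m : Polynomial ℝ) + 2) *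
        (X * Rr (m+1) + ((m : Polynomial ℝ) + 1) * derivative^[m] q) := by
      have h0 : Rr (m + 2) = derivative^[m+1] (derivative (((X : Polynomial ℝ)^2 - 1) ^ (m+2))) := by
        rw [Rr, Function.iterate_succ_apply]
      rw [h0, F1, iterate_derivative_C_mul, L1, hDq1, C_norm]
      push_cast
      ring
    have e_II : Rr (m + 2) = X * (X * derivative (Rr (m+1)) + ((m : Polynomial ℝ) + 2) * Rr (m+1))
        + ((m : Polynomial ℝ) + 2) * (X * Rr (m+1) + ((m : Polynomial ℝ) + 1) * derivative^[m] q)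
        - derivative (Rr (m+1)) := by
      have h0 : Rr (m + 2) = derivative^[m+2] (X * (X * q)) - derivative^[m+2] q := by
        rw [Rr, ← iterate_derivative_sub]
        congr 1
        rw [pow_succ]
        ring
      have hL : derivative^[m+1] (X * q) = X * Rr (m+1) + ((m : Polynomial ℝ) + 1) * derivative^[m] q := by
        rw [L1 m q, hDq1]
      rw [h0, L1 (m+1) (X * q), L1 (m+1) q, hDq2, hDq1, hL]
      push_cast
      ring
    have goal : Rr (m + 1 + 1) =
        2 * (((m:Polynomial ℝ) + 1) + 1) * (X * Rr (m+1)) + 2 * ((X:Polynomial ℝ)^2 - 1) * derivative (Rr (m+1)) := by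
      linear_combination (2 : Polynomial ℝ) * e_II - e_star
    push_cast at goal ⊢
    exact goal

lemma bonnet (m : ℕ) : Rr (m + 2) =
    2 * (2 * (m : Polynomial ℝ) + 3) * (X * Rr (m + 1)) -
      4 * ((m : Polynomial ℝ) + 1) ^ 2 * Rr m := by
  have A := hIII (m + 1)
  have B := hI m
  have Cc := hIII m
  push_cast at A
  linear_combination A + 2 * ((X:Polynomial ℝ)^2 - 1) * B - 2 * ((m : Polynomial ℝ) + 1) * X * Cc



lemma iter_eval (Q : Polynomial ℝ) (k : ℕ) :
    iteratedDeriv k (fun y : ℝ => Q.eval y) = fun y => (derivative^[k] Q).eval y := by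
  induction k with
  | zero => simp
  | succ k ih =>
    rw [iteratedDeriv_succ, ih, Function.iterate_succ_apply']
    funext y
    exact Polynomial.deriv _

lemma legendreP_eq (n : ℕ) (x : ℝ) :
    legendreP n x = (1 / (2 ^ n * (Nat.factorial n : ℝ))) * (Rr n).eval x := by
  have h1 : (fun y : ℝ => (y ^ 2 - 1) ^ n) = fun y : ℝ => (((X:Polynomial ℝ) ^ 2 - 1) ^ n).eval y := by
    funext y; simp
  rw [legendreP, h1, iter_eval, Rr]

lemma P_zero (x : ℝ) : legendreP 0 x = 1 := by
  simp [legendreP_eq, Rr]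

lemma P_one (x : ℝ) : legendreP 1 x = x := by
  rw [legendreP_eq]
  have : Rr 1 = 2 * X := by
    rw [Rr]
    simp [C_eq_natCast, map_ofNat]
    norm_num
  rw [this]
  simp

lemma P_rec (m : ℕ) (x : ℝ) :
    ((m : ℝ) + 2) * legendreP (m + 2) x =
      (2 * m + 3) * x * legendreP (m + 1) x - ((m : ℝ) + 1) * legendreP m x := by
  have hB := congrArg (eval x) (bonnet m)
  simp only [eval_mul, eval_add, eval_sub, eval_pow, eval_ofNat, eval_natCast, eval_X,
    eval_one] at hB
  rw [legendreP_eq, legendreP_eq, legendreP_eq, hB]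
  have h2 : (Nat.factorial (m+2) : ℝ) = ((m:ℝ)+2) * (m+1) * Nat.factorial m := by
    rw [Nat.factorial_succ, Nat.factorial_succ]; push_cast; ring
  have h1 : (Nat.factorial (m+1) : ℝ) = ((m:ℝ)+1) * Nat.factorial m := by
    rw [Nat.factorial_succ]; push_cast; ring
  rw [h2, h1]
  have hf : (Nat.factorial m : ℝ) ≠ 0 := Nat.cast_ne_zero.mpr (Nat.factorial_ne_zero m)
  have hm1 : ((m:ℝ)+1) ≠ 0 := by positivity
  have hm2 : ((m:ℝ)+2) ≠ 0 := by positivity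
  have hp : (2:ℝ)^m ≠ 0 := by positivity
  field_simp
  ring


/-- shift of a sequence -/
def sh (a : ℕ → ℝ) : ℕ → ℝ := fun n => match n with | 0 => 0 | k+1 => a k

lemma sh_hasSum {a : ℕ → ℝ} {t S : ℝ} (h : HasSum (fun n => a n * t ^ n) S) :
    HasSum (fun n => sh a n * t ^ n) (t * S) := by
  have h1 : HasSum (fun n => sh a (n + 1) * t ^ (n + 1)) (t * S) := by
    have h2 := h.mul_left t
    have : (fun n => t * (a n * t ^ n)) = fun n => sh a (n + 1) * t ^ (n + 1) := by
      funext n; simp [sh]; ring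
    rwa [this] at h2
  have h3 := (hasSum_nat_add_iff (f := fun n => sh a n * t ^ n) 1).mp h1
  simpa [sh] using h3

lemma aux_ofScalars {h : ℝ → ℝ} (hh : AnalyticAt ℝ h 0) :
    HasFPowerSeriesAt h
      (ofScalars ℝ (fun n => iteratedDeriv n h 0 / (Nat.factorial n : ℝ))) 0 := by
  obtain ⟨p, hp⟩ := hh
  have hcoeff : ∀ n, (p n fun _ => (1:ℝ)) = iteratedDeriv n h 0 / (Nat.factorial n : ℝ) := by
    intro n
    obtain ⟨r, hr⟩ := hp
    have h1 := hr.factorial_smul (1:ℝ) n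
    rw [← iteratedDeriv_eq_iteratedFDeriv] at h1
    have h2 : ((Nat.factorial n : ℝ)) * (p n fun _ => 1) = iteratedDeriv n h 0 := by
      rw [← h1]; simp [nsmul_eq_mul]
    have h3 : (Nat.factorial n : ℝ) ≠ 0 := Nat.cast_ne_zero.mpr (Nat.factorial_ne_zero n)
    rw [eq_div_iff h3]
    linear_combination h2
  suffices hps : p = ofScalars ℝ (fun n => iteratedDeriv n h 0 / (Nat.factorial n : ℝ)) by
    rw [← hps]; exact hp
  ext n v
  rw [hcoeff, ofScalars_apply_eq]
  simp


lemma analytic_part (x : ℝ) :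
    AnalyticAt ℝ (fun t : ℝ => (1 - 2 * t * x + t ^ 2) ^ (-(1 : ℝ) / 2)) 0 := by
  have hb : AnalyticAt ℂ (fun z : ℂ => 1 - 2 * z * (x:ℂ) + z ^ 2) 0 := by
    apply AnalyticAt.add
    · exact analyticAt_const.sub ((analyticAt_const.mul analyticAt_id).mul analyticAt_const)
    · exact analyticAt_id.pow 2
  have hmem : (fun z : ℂ => 1 - 2 * z * (x:ℂ) + z ^ 2) 0 ∈ Complex.slitPlane := by
    simp [Complex.mem_slitPlane_iff]
  have hF : AnalyticAt ℂ (fun z : ℂ => (1 - 2 * z * (x:ℂ) + z ^ 2) ^ (-(1:ℂ) / 2)) 0 :=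
    hb.cpow analyticAt_const hmem
  have hFR : AnalyticAt ℝ (fun z : ℂ => (1 - 2 * z * (x:ℂ) + z ^ 2) ^ (-(1:ℂ) / 2)) 0 :=
    hF.restrictScalars
  have hof : AnalyticAt ℝ (fun t : ℝ => (t : ℂ)) 0 := Complex.ofRealCLM.analyticAt 0
  have h1 : AnalyticAt ℝ ((fun z : ℂ => (1 - 2 * z * (x:ℂ) + z ^ 2) ^ (-(1:ℂ) / 2)) ∘
      (fun t : ℝ => (t : ℂ))) 0 := by
    apply AnalyticAt.comp _ hof
    exact (by norm_num : (((0:ℝ):ℂ)) = 0) ▸ hFR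
  have h2 : AnalyticAt ℝ ((fun z : ℂ => z.re) ∘ ((fun z : ℂ => (1 - 2 * z * (x:ℂ) + z ^ 2) ^ (-(1:ℂ) / 2)) ∘
      (fun t : ℝ => (t : ℂ)))) 0 := by
    apply AnalyticAt.comp _ h1
    exact Complex.reCLM.analyticAt _
  apply AnalyticAt.congr (f := (fun z : ℂ => z.re) ∘ ((fun z : ℂ => (1 - 2 * z * (x:ℂ) + z ^ 2) ^ (-(1:ℂ) / 2)) ∘ (fun t : ℝ => (t : ℂ)))) h2
  have hg : ∀ᶠ t : ℝ in nhds 0, 0 < 1 - 2 * t * x + t ^ 2 := by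
    have hc : ContinuousAt (fun t : ℝ => 1 - 2 * t * x + t ^ 2) 0 := by fun_prop
    exact hc.eventually (eventually_gt_nhds (by norm_num : (0:ℝ) < 1 - 2 * 0 * x + 0 ^ 2))
  filter_upwards [hg] with t ht
  show ((1 - 2 * (t:ℂ) * (x:ℂ) + (t:ℂ) ^ 2) ^ (-(1:ℂ) / 2)).re = _
  have hcast : (1 - 2 * (t:ℂ) * (x:ℂ) + (t:ℂ) ^ 2) = ((1 - 2 * t * x + t ^ 2 : ℝ) : ℂ) := by
    push_cast; ring
  rw [hcast, show (-(1:ℂ) / 2) = ((-(1:ℝ) / 2 : ℝ) : ℂ) by norm_num,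
    ← Complex.ofReal_cpow ht.le, Complex.ofReal_re]

lemma ode_part (x t : ℝ) (hgt : 0 < 1 - 2 * t * x + t ^ 2) :
    (1 - 2 * t * x + t ^ 2) * deriv (fun t : ℝ => (1 - 2 * t * x + t ^ 2) ^ (-(1 : ℝ) / 2)) t
      = (x - t) * (1 - 2 * t * x + t ^ 2) ^ (-(1 : ℝ) / 2) := by
  have hgd : HasDerivAt (fun s : ℝ => 1 - 2 * s * x + s ^ 2) (2 * t - 2 * x) t := by
    have h1 : HasDerivAt (fun s : ℝ => 1 - 2 * s * x + s ^ 2) (0 - 2 * 1 * x + 2 * t ^ 1) t := by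
      exact ((hasDerivAt_const t (1:ℝ)).sub (((hasDerivAt_id t).const_mul 2).mul_const x)).add
        (hasDerivAt_pow 2 t)
    convert h1 using 1; ring
  have hrp := Real.hasDerivAt_rpow_const (x := 1 - 2 * t * x + t ^ 2) (p := -(1:ℝ)/2)
    (Or.inl (ne_of_gt hgt))
  have hcomp := hrp.comp t hgd
  have hd : deriv (fun t : ℝ => (1 - 2 * t * x + t ^ 2) ^ (-(1 : ℝ) / 2)) t
      = -(1:ℝ)/2 * (1 - 2 * t * x + t ^ 2) ^ (-(1:ℝ)/2 - 1) * (2 * t - 2 * x) :=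
    hcomp.deriv
  rw [hd]
  have hkey : (1 - 2 * t * x + t ^ 2) * (1 - 2 * t * x + t ^ 2) ^ (-(1:ℝ)/2 - 1)
      = (1 - 2 * t * x + t ^ 2) ^ (-(1:ℝ)/2) := by
    nth_rewrite 1 [← Real.rpow_one (1 - 2 * t * x + t ^ 2)]
    rw [← Real.rpow_add hgt]
    norm_num
  calc (1 - 2 * t * x + t ^ 2) * (-(1:ℝ)/2 * (1 - 2 * t * x + t ^ 2) ^ (-(1:ℝ)/2 - 1) * (2 * t - 2 * x))
      = (x - t) * ((1 - 2 * t * x + t ^ 2) * (1 - 2 * t * x + t ^ 2) ^ (-(1:ℝ)/2 - 1)) := by ring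
    _ = (x - t) * (1 - 2 * t * x + t ^ 2) ^ (-(1:ℝ)/2) := by rw [hkey]

lemma coeff_rec (x : ℝ) :
    ∀ m : ℕ, ((m:ℝ) + 2) *
        (iteratedDeriv (m+2) (fun t : ℝ => (1 - 2 * t * x + t ^ 2) ^ (-(1 : ℝ) / 2)) 0
          / (Nat.factorial (m+2) : ℝ))
      = (2*(m:ℝ)+3) * x *
          (iteratedDeriv (m+1) (fun t : ℝ => (1 - 2 * t * x + t ^ 2) ^ (-(1 : ℝ) / 2)) 0
            / (Nat.factorial (m+1) : ℝ))
        - ((m:ℝ)+1) *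
          (iteratedDeriv m (fun t : ℝ => (1 - 2 * t * x + t ^ 2) ^ (-(1 : ℝ) / 2)) 0
            / (Nat.factorial m : ℝ)) := by
  set f : ℝ → ℝ := fun t : ℝ => (1 - 2 * t * x + t ^ 2) ^ (-(1 : ℝ) / 2) with hf
  set c : ℕ → ℝ := fun n => iteratedDeriv n f 0 / (Nat.factorial n : ℝ) with hc
  have hf0 : AnalyticAt ℝ f 0 := analytic_part x
  -- analyticity of the derivative
  have hf1 : AnalyticAt ℝ (deriv f) 0 := by
    have hev := hf0.eventually_analyticAt
    rcases mem_nhds_iff.mp hev with ⟨s, hsub, hop, h0⟩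
    exact (AnalyticOnNhd.deriv (fun y hy => hsub hy)) 0 h0
  -- power series for f and its derivative
  have hfps : HasFPowerSeriesAt f (ofScalars ℝ c) 0 := aux_ofScalars hf0
  set u : ℕ → ℝ := fun n => ((n:ℝ) + 1) * c (n+1) with hu
  have hups : HasFPowerSeriesAt (deriv f) (ofScalars ℝ u) 0 := by
    have h1 := aux_ofScalars hf1
    have h2 : (fun n => iteratedDeriv n (deriv f) 0 / (Nat.factorial n : ℝ)) = u := by
      funext n
      have h3 : iteratedDeriv n (deriv f) 0 = iteratedDeriv (n+1) f 0 := by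
        rw [iteratedDeriv_succ']
      rw [h3]
      show iteratedDeriv (n+1) f 0 / (Nat.factorial n : ℝ)
        = ((n:ℝ)+1) * (iteratedDeriv (n+1) f 0 / (Nat.factorial (n+1) : ℝ))
      rw [Nat.factorial_succ]
      have h5 : (Nat.factorial n : ℝ) ≠ 0 := Nat.cast_ne_zero.mpr (Nat.factorial_ne_zero n)
      have h6 : ((n:ℝ)+1) ≠ 0 := by positivity
      push_cast
      field_simp
    rwa [h2] at h1
  obtain ⟨r1, hr1⟩ := hfps
  obtain ⟨r2, hr2⟩ := hups
  -- positivity neighborhood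
  have hgev : ∀ᶠ t : ℝ in nhds 0, 0 < 1 - 2 * t * x + t ^ 2 := by
    have hcont : ContinuousAt (fun t : ℝ => 1 - 2 * t * x + t ^ 2) 0 := by fun_prop
    exact hcont.eventually (eventually_gt_nhds (by norm_num : (0:ℝ) < 1 - 2 * 0 * x + 0 ^ 2))
  have hS : {t : ℝ | t ∈ EMetric.ball (0:ℝ) r1 ∧ t ∈ EMetric.ball (0:ℝ) r2 ∧
      0 < 1 - 2 * t * x + t ^ 2} ∈ nhds (0:ℝ) := by
    refine Filter.inter_mem (EMetric.ball_mem_nhds _ hr1.r_pos)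
      (Filter.inter_mem (EMetric.ball_mem_nhds _ hr2.r_pos) hgev)
  rcases Metric.mem_nhds_iff.mp hS with ⟨ρ, hρpos, hρsub⟩
  set b : ℕ → ℝ := fun n => u n - 2*x*sh u n + sh (sh u) n - (x * c n - sh c n) with hb
  -- key : HasSum of b-series is 0 on the ball
  have key : ∀ t : ℝ, |t| < ρ → HasSum (fun n => b n * t ^ n) 0 := by
    intro t ht
    have htS : t ∈ EMetric.ball (0:ℝ) r1 ∧ t ∈ EMetric.ball (0:ℝ) r2 ∧
        0 < 1 - 2 * t * x + t ^ 2 := hρsub (by simpa [Metric.mem_ball, Real.dist_eq] using ht)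
    obtain ⟨ht1, ht2, hgt⟩ := htS
    have h1 : HasSum (fun n => c n * t ^ n) (f t) := by
      have h := hr1.hasSum (y := t) ht1
      rw [zero_add] at h
      have heq : (fun n => (ofScalars ℝ c) n fun _ => t) = fun n => c n * t ^ n := by
        funext n; rw [ofScalars_apply_eq]; simp [smul_eq_mul]
      rwa [heq] at h
    have h2 : HasSum (fun n => u n * t ^ n) (deriv f t) := by
      have h := hr2.hasSum (y := t) ht2
      rw [zero_add] at h
      have heq : (fun n => (ofScalars ℝ u) n fun _ => t) = fun n => u n * t ^ n := by
        funext n; rw [ofScalars_apply_eq]; simp [smul_eq_mul]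
      rwa [heq] at h
    have h3 := sh_hasSum h2
    have h4 := sh_hasSum h3
    have h5 := sh_hasSum h1
    have hsum := ((h2.sub (h3.mul_left (2*x))).add h4).sub ((h1.mul_left x).sub h5)
    have hfun : (fun n => (u n * t ^ n - 2*x*(sh u n * t ^ n) + sh (sh u) n * t ^ n)
        - (x * (c n * t ^ n) - sh c n * t ^ n)) = fun n => b n * t ^ n := by
      funext n; rw [hb]; ring
    rw [hfun] at hsum
    have hval : deriv f t - 2*x*(t * deriv f t) + t * (t * deriv f t)
        - (x * f t - t * f t) = 0 := by
      have hode := ode_part x t hgt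
      rw [hf]
      linear_combination hode
    rwa [hval] at hsum
  -- package into a power series for the zero function
  have hq : HasFPowerSeriesOnBall (fun _ : ℝ => (0:ℝ)) (ofScalars ℝ b) 0 (ENNReal.ofReal ρ) := by
    constructor
    · apply ENNReal.le_of_forall_nnreal_lt
      intro s hs
      have hsρ : (s:ℝ) < ρ := by
        rw [ENNReal.ofReal] at hs
        have h2 := NNReal.coe_lt_coe.mpr (ENNReal.coe_lt_coe.mp hs)
        rwa [Real.coe_toNNReal _ hρpos.le] at h2
      apply FormalMultilinearSeries.le_radius_of_tendsto (l := 0)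
      have hsum := key (s:ℝ) (by rwa [abs_of_nonneg s.coe_nonneg])
      have hterm := hsum.summable.tendsto_atTop_zero
      have heq : (fun n => ‖ofScalars ℝ b n‖ * (s:ℝ) ^ n) = fun n => |b n * (s:ℝ) ^ n| := by
        funext n
        rw [ofScalars_norm, abs_mul, abs_pow, abs_of_nonneg s.coe_nonneg, Real.norm_eq_abs]
      rw [heq]
      simpa using hterm.abs
    · simpa using hρpos
    · intro y hy
      have hy' : |y| < ρ := by
        simpa [edist_dist, Real.dist_eq, ENNReal.ofReal_lt_ofReal_iff hρpos] using hy
      have heq : (fun n => (ofScalars ℝ b) n fun _ => y) = fun n => b n * y ^ n := by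
        funext n; rw [ofScalars_apply_eq]; simp [smul_eq_mul]
      rw [heq]
      exact key y hy'
  have hbz : ∀ n, b n = 0 := by
    have h0 : HasFPowerSeriesAt (0 : ℝ → ℝ) (ofScalars ℝ b) 0 := ⟨_, hq⟩
    have := h0.eq_zero
    intro n
    have h2 := congrFun this n
    exact (ofScalars_eq_zero (𝕜 := ℝ) ℝ n).mp h2
  -- extract the recurrence
  intro m
  have hB := hbz (m+1)
  rw [hb] at hB
  show ((m:ℝ) + 2) * c (m+2) = (2*(m:ℝ)+3) * x * c (m+1) - ((m:ℝ)+1) * c m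
  have hsh1 : sh u (m+1) = u m := rfl
  have hsh2 : sh c (m+1) = c m := rfl
  cases m with
  | zero =>
    have hsh3 : sh (sh u) 1 = 0 := rfl
    simp only [hsh1, hsh2, hsh3, hu, sh] at hB
    push_cast at hB ⊢
    linarith [hB]
  | succ k =>
    have hsh3 : sh (sh u) (k+2) = u k := rfl
    simp only [hsh1, hsh2, hsh3, hu, sh] at hB
    push_cast at hB ⊢
    linarith [hB]


lemma c_zero (x : ℝ) :
    iteratedDeriv 0 (fun t : ℝ => (1 - 2 * t * x + t ^ 2) ^ (-(1 : ℝ) / 2)) 0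
      / (Nat.factorial 0 : ℝ) = 1 := by
  rw [iteratedDeriv_zero]
  norm_num

lemma c_one (x : ℝ) :
    iteratedDeriv 1 (fun t : ℝ => (1 - 2 * t * x + t ^ 2) ^ (-(1 : ℝ) / 2)) 0
      / (Nat.factorial 1 : ℝ) = x := by
  rw [iteratedDeriv_one]
  have h := ode_part x 0 (by norm_num)
  rw [show (1 - 2*(0:ℝ)*x + 0^2) = 1 by norm_num, Real.one_rpow, one_mul, sub_zero,
    mul_one] at h
  rw [h]
  norm_num

end LegendreGF

/-- Generating function of the Legendre polynomials: for every real `x`, the map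
`t ↦ (1 - 2tx + t²)^(-1/2)` is real analytic near `t = 0` and its `n`-th Taylor
coefficient at `t = 0`, namely `(1/n!)·(d/dt)^n (1-2tx+t²)^(-1/2)|_{t=0}`, equals `p_n(x)`. -/
theorem legendre_generating_function (x : ℝ) :
    AnalyticAt ℝ (fun t : ℝ => (1 - 2 * t * x + t ^ 2) ^ (-(1 : ℝ) / 2)) 0 ∧
      ∀ n : ℕ,
        iteratedDeriv n (fun t : ℝ => (1 - 2 * t * x + t ^ 2) ^ (-(1 : ℝ) / 2)) 0
            / (Nat.factorial n : ℝ)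
          = legendreP n x := by
  refine ⟨LegendreGF.analytic_part x, ?_⟩
  set c : ℕ → ℝ := fun n =>
    iteratedDeriv n (fun t : ℝ => (1 - 2 * t * x + t ^ 2) ^ (-(1 : ℝ) / 2)) 0
      / (Nat.factorial n : ℝ) with hc
  have main : ∀ n : ℕ, c n = legendreP n x ∧ c (n+1) = legendreP (n+1) x := by
    intro n
    induction n with
    | zero =>
      constructor
      · exact (LegendreGF.c_zero x).trans (LegendreGF.P_zero x).symm
      · exact (LegendreGF.c_one x).trans (LegendreGF.P_one x).symm
    | succ m ih =>
      refine ⟨ih.2, ?_⟩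
      have h1 := LegendreGF.coeff_rec x m
      have h2 := LegendreGF.P_rec m x
      have h3 : ((m:ℝ) + 2) * c (m+2) = ((m:ℝ) + 2) * legendreP (m+2) x := by
        have h1' : ((m:ℝ)+2) * c (m+2) = (2*(m:ℝ)+3)*x*c (m+1) - ((m:ℝ)+1)*c m := h1
        rw [h1', ih.1, ih.2, ← h2]
      have h4 : ((m:ℝ) + 2) ≠ 0 := by positivity
      exact mul_left_cancel₀ h4 h3
  exact fun n => (main n).1
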